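/- arXiv:2601.17626 — 5 statements merged into one kernel-verified Lean document; each statement's English description precedes it below -/
import Mathlib

section
/- Let k ≥ 0 and n = k+1. For any α_0,…,α_k ∈ ℂ and a, b ∈ ℂ^n, setting p(x,y) = Σ_{i=0}^k α_i x^{k-i} y^i, we have det([p(a_r,b_s)]_{r,s=1}^n) = (-1)^{C(k+1,2)} · (Π_{i=0}^k α_i) · Π_{1≤i<j≤n}(a_j - a_i) · Π_{1≤i<j≤n}(b_j - b_i). -/
open Equiv Equiv.Perm

theorem rev_decomp (n : ℕ) : Fin.revPerm (n := n+2) =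
    Equiv.Perm.decomposeFin.symm (Fin.last (n+1), (finRotate (n+1))⁻¹ * Fin.revPerm) := by
  ext i
  refine Fin.cases ?_ (fun j => ?_) i
  · simp [Fin.rev_zero]
  · rw [Equiv.Perm.decomposeFin_symm_apply_succ]
    simp only [Perm.mul_apply, Fin.revPerm_apply]
    obtain ⟨y, hyy⟩ : ∃ y, finRotate (n+1) y = Fin.rev j :=
      ⟨(finRotate (n+1))⁻¹ (Fin.rev j), by simp⟩
    rw [← hyy, Equiv.Perm.inv_def, Equiv.symm_apply_apply]
    rw [finRotate_succ_apply] at hyy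
    by_cases hl : y = Fin.last n
    · have hj : j = Fin.last n := by
        have h0 : Fin.rev j = 0 := by
          rw [← hyy, hl]
          ext
          simp [Fin.last, Fin.add_def]
        have := congrArg Fin.rev h0
        rwa [Fin.rev_rev, Fin.rev_zero] at this
      subst hj
      subst hl
      simp [Fin.succ_last, Fin.rev_last]
    · have hv : y.val < n := by
        have h1 := y.isLt
        rcases Nat.lt_or_ge y.val n with h | h
        · exact h
        · exact absurd (Fin.ext (by simp [Fin.val_last]; omega)) hl
      have hadd : (y + 1).val = y.val + 1 := by
        rw [Fin.val_add_one, if_neg hl]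
      have hrev : (Fin.rev j).val = n - j.val := by
        rw [Fin.val_rev]; omega
      have key : y.val + 1 = n - j.val := by rw [← hadd, hyy, hrev]
      have h1 : y.succ ≠ 0 := Fin.succ_ne_zero y
      have h2 : y.succ ≠ Fin.last (n+1) := by
        intro h
        have := congrArg Fin.val h
        simp only [Fin.val_succ, Fin.val_last] at this
        omega
      rw [Equiv.swap_apply_of_ne_of_ne h1 h2]
      have hjv : j.val < n + 1 := j.isLt
      rw [Fin.val_rev, Fin.val_succ, Fin.val_succ]
      omega

theorem sign_rev (n : ℕ) : Perm.sign (Fin.revPerm : Perm (Fin n)) = (-1) ^ n.choose 2 := by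
  induction n with
  | zero => decide
  | succ n ih =>
    cases n with
    | zero => decide
    | succ m =>
      rw [rev_decomp, Equiv.Perm.decomposeFin.symm_sign,
        if_neg (by simp [Fin.ext_iff]), map_mul, map_inv, sign_finRotate, ih]
      have h : (m+2).choose 2 = (m+1).choose 2 + (m+1) := by
        rw [Nat.choose_succ_succ]; simp [Nat.choose_one_right]; ring
      rw [Int.units_inv_eq_self, h, pow_add, pow_succ]
      simp [mul_comm, mul_left_comm, mul_assoc]

theorem stmt_3 (k : ℕ) (α : Fin (k + 1) → ℂ) (a b : Fin (k + 1) → ℂ) :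
    Matrix.det (Matrix.of fun r s : Fin (k + 1) =>
        ∑ i : Fin (k + 1), α i * a r ^ (k - (i : ℕ)) * b s ^ (i : ℕ)) =
      (-1 : ℂ) ^ ((k + 1).choose 2) * (∏ i : Fin (k + 1), α i) *
        (∏ i : Fin (k + 1), ∏ j : Fin (k + 1), if i < j then a j - a i else 1) *
        (∏ i : Fin (k + 1), ∏ j : Fin (k + 1), if i < j then b j - b i else 1) := by
  have hite : ∀ v : Fin (k + 1) → ℂ,
      (∏ i : Fin (k + 1), ∏ j : Fin (k + 1), if i < j then v j - v i else 1) =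
      ∏ i : Fin (k + 1), ∏ j ∈ Finset.Ioi i, (v j - v i) := by
    intro v
    refine Finset.prod_congr rfl fun i _ => ?_
    have h2 : Finset.Ioi i = Finset.univ.filter (fun j => i < j) := by
      ext j; simp
    rw [h2, Finset.prod_filter]
  have hM : (Matrix.of fun r s : Fin (k + 1) =>
        ∑ i : Fin (k + 1), α i * a r ^ (k - (i : ℕ)) * b s ^ (i : ℕ)) =
      (((Matrix.vandermonde a).submatrix id Fin.revPerm) * Matrix.diagonal α) *
        Matrix.transpose (Matrix.vandermonde b) := by
    ext r s
    rw [Matrix.mul_apply]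
    simp only [Matrix.mul_apply, Matrix.diagonal_apply, Matrix.submatrix_apply,
      Matrix.vandermonde_apply, Matrix.transpose_apply, Matrix.of_apply,
      Finset.mul_sum, Finset.sum_mul]
    refine Finset.sum_congr rfl fun i _ => ?_
    rw [Finset.sum_eq_single i]
    · have : (Fin.revPerm i : ℕ) = k - i := by
        simp [Fin.val_rev]
      rw [if_pos rfl, this]; simp only [id_eq]; ring
    · intro j _ hj; rw [if_neg hj]; ring
    · intro h; exact absurd (Finset.mem_univ i) h
  rw [hM, Matrix.det_mul, Matrix.det_mul, Matrix.det_permute' Fin.revPerm,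
    Matrix.det_diagonal, Matrix.det_transpose, Matrix.det_vandermonde,
    Matrix.det_vandermonde, sign_rev, hite a, hite b]
  push_cast
  ring
end

section
/- Let k ≥ 0 and n = k+1 with p(x,y) = Σ_{i=0}^k α_i x^{k-i} y^i, α_i ∈ ℂ, and a, b ∈ ℂ^n. Then det([p(a_r,b_s)]_{r,s}) ≠ 0 if and only if α_i ≠ 0 for all 0 ≤ i ≤ k, the entries a_1,…,a_n are pairwise distinct, and the entries b_1,…,b_n are pairwise distinct. -/
theorem stmt_4 (k : ℕ) (α : Fin (k + 1) → ℂ) (a b : Fin (k + 1) → ℂ) :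
    Matrix.det (Matrix.of fun r s : Fin (k + 1) =>
        ∑ i : Fin (k + 1), α i * a r ^ (k - (i : ℕ)) * b s ^ (i : ℕ)) ≠ 0 ↔
      (∀ i : Fin (k + 1), α i ≠ 0) ∧ Function.Injective a ∧ Function.Injective b := by
  have hM : (Matrix.of fun r s : Fin (k + 1) =>
        ∑ i : Fin (k + 1), α i * a r ^ (k - (i : ℕ)) * b s ^ (i : ℕ)) =
      ((Matrix.vandermonde a).submatrix id Fin.revPerm) * Matrix.diagonal α *
        Matrix.transpose (Matrix.vandermonde b) := by
    ext r s
    simp [Matrix.mul_apply, Matrix.diagonal, Matrix.vandermonde, Finset.sum_mul,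
      Fin.val_rev]
    congr 1
    ext i
    ring
  rw [hM, Matrix.det_mul, Matrix.det_mul, Matrix.det_permute', Matrix.det_transpose,
    Matrix.det_diagonal]
  simp only [mul_ne_zero_iff, Finset.prod_ne_zero_iff]
  constructor
  · rintro ⟨⟨⟨-, hva⟩, hα⟩, hvb⟩
    exact ⟨fun i => hα i (Finset.mem_univ i),
      Matrix.det_vandermonde_ne_zero_iff.mp hva,
      Matrix.det_vandermonde_ne_zero_iff.mp hvb⟩
  · rintro ⟨hα, ha, hb⟩
    refine ⟨⟨⟨?_, Matrix.det_vandermonde_ne_zero_iff.mpr ha⟩, fun i _ => hα i⟩,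
      Matrix.det_vandermonde_ne_zero_iff.mpr hb⟩
    simp [Int.isUnit_iff.mp (Equiv.Perm.sign _).isUnit]
end

section
/- Let k ≥ 0, n = k+1, and a, b ∈ ℂ^n. Then det([(a_r + b_s)^k]_{r,s=1}^n) = (-1)^{C(k+1,2)} · (Π_{i=0}^k C(k,i)) · Π_{1≤i<j≤n}(a_j - a_i) · Π_{1≤i<j≤n}(b_j - b_i). -/
open Equiv Finset Matrix

private def castSuccEquiv (n : ℕ) : Fin n ≃ {i : Fin (n + 1) // (i : ℕ) < n} :=
  { toFun := fun i => ⟨i.castSucc, by simp⟩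
    invFun := fun i => ⟨(i : Fin (n+1)), i.2⟩
    left_inv := fun i => rfl
    right_inv := fun i => rfl }

theorem sign_revPerm' (n : ℕ) :
    Equiv.Perm.sign (Fin.revPerm : Equiv.Perm (Fin n)) = (-1) ^ (n.choose 2) := by
  induction n with
  | zero => simp [Subsingleton.elim (Fin.revPerm : Equiv.Perm (Fin 0)) 1]
  | succ n ih =>
    have hdecomp : (Fin.revPerm : Equiv.Perm (Fin (n + 1))) =
        finRotate (n + 1) * (Fin.revPerm : Equiv.Perm (Fin n)).extendDomain (castSuccEquiv n) := by
      ext i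
      rcases Fin.eq_castSucc_or_eq_last i with ⟨j, rfl⟩ | rfl
      · have h1 : (Fin.revPerm : Equiv.Perm (Fin n)).extendDomain (castSuccEquiv n) j.castSucc
            = (Fin.revPerm j).castSucc :=
          Equiv.Perm.extendDomain_apply_image _ (castSuccEquiv n) j
        simp only [Equiv.Perm.mul_apply, h1]
        have hj := j.isLt
        rw [finRotate_succ_apply, Fin.val_add_one_of_lt (Fin.castSucc_lt_last _)]
        simp only [Fin.revPerm_apply, Fin.val_rev, Fin.coe_castSucc]
        omega
      · have h1 : (Fin.revPerm : Equiv.Perm (Fin n)).extendDomain (castSuccEquiv n) (Fin.last n)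
            = Fin.last n := by
          apply Equiv.Perm.extendDomain_apply_not_subtype
          simp
        simp only [Equiv.Perm.mul_apply, h1]
        simp [Fin.rev_last, finRotate_succ_apply, Fin.ext_iff]
    rw [hdecomp, _root_.map_mul, sign_finRotate, Equiv.Perm.sign_extendDomain, ih,
      Nat.add_sub_cancel, ← pow_add, Nat.choose_succ_succ, Nat.choose_one_right]

theorem stmt_5 (k : ℕ) (a b : Fin (k + 1) → ℂ) :
    Matrix.det (Matrix.of fun r s : Fin (k + 1) => (a r + b s) ^ k) =
      (-1 : ℂ) ^ ((k + 1).choose 2) * (∏ i ∈ Finset.range (k + 1), (k.choose i : ℂ)) *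
        (∏ i : Fin (k + 1), ∏ j : Fin (k + 1), if i < j then a j - a i else 1) *
        (∏ i : Fin (k + 1), ∏ j : Fin (k + 1), if i < j then b j - b i else 1) := by
  have hIoi : ∀ (v : Fin (k+1) → ℂ),
      (∏ i : Fin (k+1), ∏ j ∈ Ioi i, (v j - v i))
        = ∏ i : Fin (k+1), ∏ j : Fin (k+1), if i < j then v j - v i else 1 := by
    intro v
    refine Finset.prod_congr rfl fun i _ => ?_
    rw [← Finset.filter_lt_eq_Ioi, Finset.prod_filter]
  -- the reversed Vandermonde
  set W : Matrix (Fin (k+1)) (Fin (k+1)) ℂ := Matrix.of fun i s => b s ^ (k - (i : ℕ)) with hW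
  have hWdet : W.det = ((-1 : ℂ)) ^ ((k + 1).choose 2) * (vandermonde b).det := by
    have hWeq : W = ((vandermonde b)ᵀ).submatrix Fin.revPerm id := by
      ext i s
      have : ((Fin.rev i : Fin (k+1)) : ℕ) = k - (i : ℕ) := by
        rw [Fin.val_rev]; omega
      simp [hW, Matrix.submatrix, this]
    rw [hWeq, Matrix.det_permute, sign_revPerm', Matrix.det_transpose]
    push_cast
    simp
  have hfact : (Matrix.of fun r s : Fin (k + 1) => (a r + b s) ^ k) =
      (vandermonde a) * (Matrix.of fun i s : Fin (k+1) =>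
        (k.choose (i : ℕ) : ℂ) * b s ^ (k - (i : ℕ))) := by
    ext r s
    rw [Matrix.mul_apply]
    simp only [Matrix.of_apply, vandermonde_apply]
    rw [add_pow, ← Fin.sum_univ_eq_sum_range
      (fun i => a r ^ i * b s ^ (k - i) * (k.choose i : ℂ))]
    exact Finset.sum_congr rfl fun i _ => by ring
  rw [hfact, Matrix.det_mul]
  have : (Matrix.of fun i s : Fin (k+1) =>
      (k.choose (i : ℕ) : ℂ) * b s ^ (k - (i : ℕ))).det
      = (∏ i : Fin (k+1), (k.choose (i : ℕ) : ℂ)) * W.det :=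
    Matrix.det_mul_column _ _
  rw [this, hWdet, Matrix.det_vandermonde, Matrix.det_vandermonde, hIoi a, hIoi b,
    ← Fin.prod_univ_eq_prod_range (fun i => (k.choose i : ℂ))]
  ring
end

section
/- Let k ≥ 0, n = k+1, and a, b ∈ ℂ^n, and let p(x,y) = Σ_{i=0}^k x^{k-i} y^i. Then det([p(a_r,b_s)]_{r,s=1}^n) = (-1)^{C(k+1,2)} · Π_{1≤i<j≤n}(a_j - a_i) · Π_{1≤i<j≤n}(b_j - b_i). -/
open Finset Matrix

private lemma ite_prod_eq {n : ℕ} (f : Fin n → Fin n → ℂ) :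
    (∏ i : Fin n, ∏ j : Fin n, if i < j then f i j else 1) =
      ∏ i : Fin n, ∏ j ∈ Finset.Ioi i, f i j := by
  refine Finset.prod_congr rfl fun i _ => ?_
  rw [← Finset.prod_filter]
  congr 1
  ext j
  simp

private lemma card_pairs (n : ℕ) : ∑ i : Fin n, (Finset.Ioi i).card = n.choose 2 := by
  simp_rw [Fin.card_Ioi]
  rw [Fin.sum_univ_eq_sum_range (fun i => n - 1 - i), ← Finset.sum_range_reflect]
  have : ∀ j ∈ Finset.range n, n - 1 - (n - 1 - j) = j := by
    intro j hj
    have := Finset.mem_range.mp hj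
    omega
  rw [Finset.sum_congr rfl this, Finset.sum_range_id, Nat.choose_two_right]

private lemma rev_flip_prod {n : ℕ} (f : Fin n → Fin n → ℂ) :
    (∏ i : Fin n, ∏ j ∈ Finset.Ioi i, f (Fin.rev i) (Fin.rev j)) =
      ∏ i : Fin n, ∏ j ∈ Finset.Ioi i, f j i := by
  rw [← ite_prod_eq, ← ite_prod_eq]
  rw [Fintype.prod_equiv Fin.revPerm _
    (fun i => ∏ j : Fin n, if Fin.rev i < Fin.rev j then f i j else 1) (fun i => ?_)]
  · simp_rw [Fin.rev_lt_rev]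
    rw [Finset.prod_comm]
  · rw [Fintype.prod_equiv Fin.revPerm]
    intro j
    simp [Fin.rev_rev]

private lemma neg_flip_prod {n : ℕ} (a : Fin n → ℂ) :
    (∏ i : Fin n, ∏ j ∈ Finset.Ioi i, (a i - a j)) =
      (-1 : ℂ) ^ (n.choose 2) * ∏ i : Fin n, ∏ j ∈ Finset.Ioi i, (a j - a i) := by
  have h : ∀ i : Fin n, ∏ j ∈ Finset.Ioi i, (a i - a j) =
      (-1 : ℂ) ^ (Finset.Ioi i).card * ∏ j ∈ Finset.Ioi i, (a j - a i) := by
    intro i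
    rw [← Finset.prod_const, ← Finset.prod_mul_distrib]
    exact Finset.prod_congr rfl fun j _ => by ring
  rw [Finset.prod_congr rfl (fun i _ => h i), Finset.prod_mul_distrib,
    Finset.prod_pow_eq_pow_sum, card_pairs]

theorem stmt_7 (k : ℕ) (a b : Fin (k + 1) → ℂ) :
    Matrix.det (Matrix.of fun r s : Fin (k + 1) =>
        ∑ i ∈ Finset.range (k + 1), a r ^ (k - i) * b s ^ i) =
      (-1 : ℂ) ^ ((k + 1).choose 2) *
        (∏ i : Fin (k + 1), ∏ j : Fin (k + 1), if i < j then a j - a i else 1) *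
        (∏ i : Fin (k + 1), ∏ j : Fin (k + 1), if i < j then b j - b i else 1) := by
  have hM : (Matrix.of fun r s : Fin (k + 1) =>
      ∑ i ∈ Finset.range (k + 1), a r ^ (k - i) * b s ^ i) =
      (Matrix.of fun (r i : Fin (k + 1)) => a r ^ (k - (i : ℕ))) *
        (Matrix.vandermonde b)ᵀ := by
    ext r s
    rw [Matrix.mul_apply, Matrix.of_apply,
      ← Fin.sum_univ_eq_sum_range (fun i => a r ^ (k - i) * b s ^ i)]
    simp [Matrix.vandermonde]
  have hA : Matrix.det (Matrix.of fun (r i : Fin (k + 1)) => a r ^ (k - (i : ℕ))) =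
      ∏ i : Fin (k + 1), ∏ j ∈ Finset.Ioi i, (a (Fin.rev j) - a (Fin.rev i)) := by
    rw [← Matrix.det_submatrix_equiv_self Fin.revPerm
      (Matrix.of fun (r i : Fin (k + 1)) => a r ^ (k - (i : ℕ)))]
    have : (Matrix.of fun (r i : Fin (k + 1)) => a r ^ (k - (i : ℕ))).submatrix
        Fin.revPerm Fin.revPerm = Matrix.vandermonde (fun r => a (Fin.rev r)) := by
      ext r i
      simp only [Matrix.submatrix_apply, Matrix.of_apply, Matrix.vandermonde_apply,
        Fin.revPerm_apply, Fin.val_rev]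
      congr 1
      omega
    rw [this, Matrix.det_vandermonde]
  rw [hM, Matrix.det_mul, Matrix.det_transpose, Matrix.det_vandermonde, hA,
    rev_flip_prod (fun i j => a j - a i), neg_flip_prod, ite_prod_eq, ite_prod_eq]
end

section
/- Let n = k+1, f a univariate polynomial of degree k over ℂ, a, b ∈ ℂ^n. For any scalars c, d ∈ ℂ, det([f(c·a_r + d·b_s)]_{r,s=1}^n) = c^{C(n,2)} · d^{C(n,2)} · det([f(a_r + b_s)]_{r,s=1}^n). -/
open Polynomial Matrix Finset

lemma vdm_scale {n : ℕ} (e : ℂ) (v : Fin n → ℂ) :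
    Matrix.det (Matrix.vandermonde fun i => e * v i) =
      e ^ (n.choose 2) * Matrix.det (Matrix.vandermonde v) := by
  have h1 : Matrix.vandermonde (fun i => e * v i) =
      Matrix.of fun i j : Fin n => e ^ (j : ℕ) * Matrix.vandermonde v i j := by
    ext i j
    simp [Matrix.vandermonde, mul_pow]
  rw [h1, Matrix.det_mul_row]
  congr 1
  rw [Finset.prod_pow_eq_pow_sum]
  congr 1
  rw [Fin.sum_univ_eq_sum_range (fun i => i) n, Finset.sum_range_id, ← Nat.choose_two_right]

lemma detFactor (k : ℕ) (f : Polynomial ℂ) (hf : f.natDegree = k)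
    (x y : Fin (k + 1) → ℂ) :
    Matrix.det (Matrix.of fun r s : Fin (k + 1) => f.eval (x r + y s)) =
      Matrix.det (Matrix.vandermonde x) *
        Matrix.det (Matrix.of fun i j : Fin (k + 1) =>
          (Polynomial.hasseDeriv (j : ℕ) f).coeff (i : ℕ)) *
        Matrix.det (Matrix.vandermonde y) := by
  have key : (Matrix.of fun r s : Fin (k + 1) => f.eval (x r + y s)) =
      Matrix.vandermonde x *
        (Matrix.of fun i j : Fin (k + 1) =>
          (Polynomial.hasseDeriv (j : ℕ) f).coeff (i : ℕ)) *
        (Matrix.vandermonde y)ᵀ := by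
    ext r s
    simp only [Matrix.mul_apply, Matrix.of_apply, Matrix.transpose_apply,
      Matrix.vandermonde]
    have h1 : f.eval (x r + y s) = (Polynomial.taylor (x r) f).eval (y s) := by
      rw [Polynomial.taylor_eval, add_comm]
    rw [h1, Polynomial.eval_eq_sum_range' (n := k + 1)
      (by rw [Polynomial.natDegree_taylor, hf]; omega)]
    rw [← Fin.sum_univ_eq_sum_range]
    refine Finset.sum_congr rfl fun j _ => ?_
    rw [Polynomial.taylor_coeff]
    have h2 : (Polynomial.hasseDeriv (j : ℕ) f).eval (x r) =
        ∑ i : Fin (k + 1), (Polynomial.hasseDeriv (j : ℕ) f).coeff (i : ℕ) * x r ^ (i : ℕ) := by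
      rw [Polynomial.eval_eq_sum_range' (n := k + 1)
        (lt_of_le_of_lt (Polynomial.natDegree_hasseDeriv_le f j) (by rw [hf]; omega)),
        ← Fin.sum_univ_eq_sum_range
          (fun i => (Polynomial.hasseDeriv (j : ℕ) f).coeff i * x r ^ i) (k + 1)]
    rw [h2]
    simp only [Finset.sum_mul]
    refine Finset.sum_congr rfl fun i _ => ?_
    ring
  rw [key, Matrix.det_mul, Matrix.det_mul, Matrix.det_transpose]

theorem stmt_16 (k : ℕ) (f : Polynomial ℂ) (hf : f.natDegree = k)
    (a b : Fin (k + 1) → ℂ) (c d : ℂ) :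
    Matrix.det (Matrix.of fun r s : Fin (k + 1) => f.eval (c * a r + d * b s)) =
      c ^ ((k + 1).choose 2) * d ^ ((k + 1).choose 2) *
        Matrix.det (Matrix.of fun r s : Fin (k + 1) => f.eval (a r + b s)) := by
  rw [detFactor k f hf (fun r => c * a r) (fun s => d * b s),
    detFactor k f hf a b, vdm_scale, vdm_scale]
  ring
end
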